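/- Let G be a complete bipartite graph K_{n,n} with a real-valued weight function on its edges, and for each k let M_k be a maximum-weight matching of cardinality k. Then for every k < n there exists a maximum-weight matching of cardinality k+1 whose set of matched vertices contains the set of vertices matched by M_k plus exactly one additional vertex from each side. Equivalently, M_{k+1} can be chosen as M_k △ p for a single augmenting path p with respect to M_k. -/

import Mathlib

def IsMatching (n : ℕ) (M : Finset (Fin n × Fin n)) : Prop :=
  ∀ e ∈ M, ∀ f ∈ M, e ≠ f → e.1 ≠ f.1 ∧ e.2 ≠ f.2

noncomputable def wSum (n : ℕ) (w : Fin n → Fin n → ℝ) (S : Finset (Fin n × Fin n)) : ℝ :=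
  ∑ e ∈ S, w e.1 e.2

noncomputable def maxAssign (n : ℕ) (w : Fin n → Fin n → ℝ) (k : ℕ) : ℝ :=
  sSup {x : ℝ | ∃ M : Finset (Fin n × Fin n), IsMatching n M ∧ M.card = k ∧ wSum n w M = x}

def IsAugmentingPath (n : ℕ) (M p : Finset (Fin n × Fin n)) : Prop :=
  ∃ (t : ℕ) (u v : ℕ → Fin n),
    (∀ i ≤ t, ∀ j ≤ t, u i = u j → i = j) ∧
    (∀ i ≤ t, ∀ j ≤ t, v i = v j → i = j) ∧
    (∀ i ≤ t, (u i, v i) ∉ M) ∧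
    (∀ i < t, (u (i + 1), v i) ∈ M) ∧
    (∀ e ∈ M, e.1 ≠ u 0) ∧
    (∀ e ∈ M, e.2 ≠ v t) ∧
    p = ((Finset.range (t + 1)).image fun i => (u i, v i)) ∪
        ((Finset.range t).image fun i => (u (i + 1), v i))


lemma matching_fst_unique {n : ℕ} {A : Finset (Fin n × Fin n)} (hA : IsMatching n A)
    {a b c : Fin n} (h1 : (a, b) ∈ A) (h2 : (a, c) ∈ A) : b = c := by
  by_contra hbc
  exact (hA _ h1 _ h2 (by simp [Prod.ext_iff, hbc])).1 rfl

lemma matching_snd_unique {n : ℕ} {A : Finset (Fin n × Fin n)} (hA : IsMatching n A)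
    {a b c : Fin n} (h1 : (a, c) ∈ A) (h2 : (b, c) ∈ A) : a = b := by
  by_contra hab
  exact (hA _ h1 _ h2 (by simp [Prod.ext_iff, hab])).2 rfl

open Classical in
noncomputable def pfstA (n : ℕ) (A : Finset (Fin n × Fin n)) (u : Fin n) : Option (Fin n) :=
  if h : ∃ v, (u, v) ∈ A then some h.choose else none

open Classical in
noncomputable def psndA (n : ℕ) (A : Finset (Fin n × Fin n)) (v : Fin n) : Option (Fin n) :=
  if h : ∃ u, (u, v) ∈ A then some h.choose else none

lemma pfstA_mem {n : ℕ} {A : Finset (Fin n × Fin n)} {u v : Fin n}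
    (h : pfstA n A u = some v) : (u, v) ∈ A := by
  unfold pfstA at h
  split at h
  · next h' => cases h; exact h'.choose_spec
  · simp at h

lemma psndA_mem {n : ℕ} {A : Finset (Fin n × Fin n)} {u v : Fin n}
    (h : psndA n A v = some u) : (u, v) ∈ A := by
  unfold psndA at h
  split at h
  · next h' => cases h; exact h'.choose_spec
  · simp at h

lemma pfstA_eq {n : ℕ} {A : Finset (Fin n × Fin n)} (hA : IsMatching n A) {u v : Fin n}
    (h : (u, v) ∈ A) : pfstA n A u = some v := by
  unfold pfstA
  have hex : ∃ v', (u, v') ∈ A := ⟨v, h⟩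
  rw [dif_pos hex]
  exact congrArg some (matching_fst_unique hA hex.choose_spec h)

lemma pfstA_none {n : ℕ} {A : Finset (Fin n × Fin n)} {u : Fin n}
    (h : pfstA n A u = none) : ∀ v, (u, v) ∉ A := by
  unfold pfstA at h
  split at h
  · simp at h
  · next h' => push_neg at h'; exact h'

lemma psndA_none {n : ℕ} {A : Finset (Fin n × Fin n)} {v : Fin n}
    (h : psndA n A v = none) : ∀ u, (u, v) ∉ A := by
  unfold psndA at h
  split at h
  · simp at h
  · next h' => push_neg at h'; exact h'

noncomputable def walkA (n : ℕ) (M N : Finset (Fin n × Fin n)) (u0 : Fin n) : ℕ → Option (Fin n)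
  | 0 => some u0
  | (i + 1) => (walkA n M N u0 i).bind fun x => (pfstA n N x).bind (psndA n M)

lemma walkA_succ_some {n : ℕ} {M N : Finset (Fin n × Fin n)} {u0 : Fin n} {i : ℕ} {b : Fin n}
    (h : walkA n M N u0 (i + 1) = some b) :
    ∃ a v, walkA n M N u0 i = some a ∧ (a, v) ∈ N ∧ (b, v) ∈ M := by
  rw [walkA] at h
  rw [Option.bind_eq_some_iff] at h
  obtain ⟨a, ha, h⟩ := h
  rw [Option.bind_eq_some_iff] at h
  obtain ⟨v, hv, h⟩ := h
  exact ⟨a, v, ha, pfstA_mem hv, psndA_mem h⟩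

lemma walkA_inj {n : ℕ} {M N : Finset (Fin n × Fin n)} {u0 : Fin n}
    (hM : IsMatching n M) (hN : IsMatching n N) (h0 : ∀ v, (u0, v) ∉ M) :
    ∀ i j a, i < j → walkA n M N u0 i = some a → walkA n M N u0 j = some a → False := by
  intro i
  induction i with
  | zero =>
    intro j a hij hi hj
    rw [walkA] at hi
    cases hi
    obtain ⟨j', rfl⟩ : ∃ j', j = j' + 1 := ⟨j - 1, by omega⟩
    obtain ⟨a', v', _, _, hbM⟩ := walkA_succ_some hj
    exact h0 v' hbM
  | succ i ih =>
    intro j a hij hi hj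
    obtain ⟨j', rfl⟩ : ∃ j', j = j' + 1 := ⟨j - 1, by omega⟩
    obtain ⟨ai, vi, hwi, hNi, hMi⟩ := walkA_succ_some hi
    obtain ⟨aj, vj, hwj, hNj, hMj⟩ := walkA_succ_some hj
    have hv : vi = vj := matching_fst_unique hM hMi hMj
    subst hv
    have ha : ai = aj := matching_snd_unique hN hNi hNj
    subst ha
    exact ih j' ai (by omega) hwi hwj

lemma walkA_exists_none {n : ℕ} {M N : Finset (Fin n × Fin n)} {u0 : Fin n}
    (hM : IsMatching n M) (hN : IsMatching n N) (h0 : ∀ v, (u0, v) ∉ M) :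
    ∃ i, walkA n M N u0 i = none := by
  by_contra h
  push_neg at h
  have h' : ∀ i, ∃ a, walkA n M N u0 i = some a := fun i => Option.ne_none_iff_exists'.mp (h i)
  choose g hg using h'
  have hginj : Function.Injective (fun i : Fin (n + 1) => g i.val) := by
    intro i j hij
    simp only at hij
    by_contra hne
    rcases lt_trichotomy i.val j.val with hlt | heq | hlt
    · exact walkA_inj hM hN h0 _ _ _ hlt (hg i.val) (hij ▸ hg j.val)
    · exact hne (Fin.ext heq)
    · exact walkA_inj hM hN h0 _ _ _ hlt (hg j.val) (hij ▸ hg i.val)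
  have := Fintype.card_le_of_injective _ hginj
  simp only [Fintype.card_fin] at this
  omega

lemma walkA_terminal {n : ℕ} {M N : Finset (Fin n × Fin n)} {u0 : Fin n}
    (hM : IsMatching n M) (hN : IsMatching n N) (h0 : ∀ v, (u0, v) ∉ M) :
    ∃ t, (∃ a, walkA n M N u0 t = some a) ∧ walkA n M N u0 (t + 1) = none := by
  have hP := walkA_exists_none hM hN h0
  have hT0 : Nat.find hP ≠ 0 := by
    intro h
    have := Nat.find_spec hP
    rw [h, walkA] at this
    exact Option.some_ne_none _ this
  refine ⟨Nat.find hP - 1, ?_, ?_⟩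
  · have := Nat.find_min hP (m := Nat.find hP - 1) (by omega)
    exact Option.ne_none_iff_exists'.mp this
  · have : Nat.find hP - 1 + 1 = Nat.find hP := by omega
    rw [this]
    exact Nat.find_spec hP

lemma walkA_some_down {n : ℕ} {M N : Finset (Fin n × Fin n)} {u0 : Fin n} :
    ∀ j a, walkA n M N u0 j = some a → ∀ i ≤ j, ∃ b, walkA n M N u0 i = some b := by
  intro j
  induction j with
  | zero => intro a h i hi; interval_cases i; exact ⟨a, h⟩
  | succ j ih =>
    intro a h i hi
    rcases Nat.eq_or_lt_of_le hi with rfl | hlt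
    · exact ⟨a, h⟩
    · obtain ⟨b, v, hb, _, _⟩ := walkA_succ_some h
      exact ih b hb i (by omega)

lemma exists_maxMatching (n j : ℕ) (hj : j ≤ n) (w : Fin n → Fin n → ℝ) :
    ∃ N, IsMatching n N ∧ N.card = j ∧
      ∀ N₂, IsMatching n N₂ → N₂.card = j → wSum n w N₂ ≤ wSum n w N := by
  classical
  set S := Finset.univ.filter
    (fun A : Finset (Fin n × Fin n) => IsMatching n A ∧ A.card = j) with hS
  have hinj : Function.Injective (fun i : Fin j => ((Fin.castLE hj i), (Fin.castLE hj i))) := by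
    intro a b hab
    simp only [Prod.mk.injEq] at hab
    exact Fin.castLE_injective hj hab.1
  have hC : (Finset.univ.image (fun i : Fin j => ((Fin.castLE hj i), (Fin.castLE hj i)))) ∈ S := by
    rw [hS, Finset.mem_filter]
    refine ⟨Finset.mem_univ _, ?_, ?_⟩
    · intro e he f hf hef
      simp only [Finset.mem_image, Finset.mem_univ, true_and] at he hf
      obtain ⟨a, rfl⟩ := he
      obtain ⟨b, rfl⟩ := hf
      have : a ≠ b := fun h => hef (by rw [h])
      constructor <;> simpa [Fin.castLE_injective hj |>.ne_iff] using this
    · rw [Finset.card_image_of_injective _ hinj, Finset.card_univ, Fintype.card_fin]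
  obtain ⟨N, hNS, hmax⟩ := S.exists_max_image (wSum n w) ⟨_, hC⟩
  rw [hS, Finset.mem_filter] at hNS
  refine ⟨N, hNS.2.1, hNS.2.2, fun N₂ h1 h2 => hmax N₂ ?_⟩
  rw [hS, Finset.mem_filter]
  exact ⟨Finset.mem_univ _, h1, h2⟩

lemma matching_subset {n : ℕ} {A B : Finset (Fin n × Fin n)} (h : A ⊆ B)
    (hB : IsMatching n B) : IsMatching n A :=
  fun e he f hf hef => hB e (h he) f (h hf) hef

lemma union_matching {n : ℕ} {A B : Finset (Fin n × Fin n)} (hA : IsMatching n A)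
    (hB : IsMatching n B) (hAB : ∀ e ∈ A, ∀ f ∈ B, e.1 ≠ f.1 ∧ e.2 ≠ f.2) :
    IsMatching n (A ∪ B) := by
  intro e he f hf hef
  rw [Finset.mem_union] at he hf
  rcases he with he | he <;> rcases hf with hf | hf
  · exact hA e he f hf hef
  · exact hAB e he f hf
  · exact ⟨(hAB f hf e he).1.symm, (hAB f hf e he).2.symm⟩
  · exact hB e he f hf hef

lemma surgery {n : ℕ} (w : Fin n → Fin n → ℝ) {A D I : Finset (Fin n × Fin n)}
    (hD : D ⊆ A) (hI : Disjoint I A) :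
    (A \ D) ∪ I = symmDiff A (D ∪ I) ∧
    ((A \ D) ∪ I).card + D.card = A.card + I.card ∧
    wSum n w ((A \ D) ∪ I) = wSum n w A - wSum n w D + wSum n w I := by
  classical
  have hdisj : Disjoint I (A \ D) := hI.mono_right (Finset.sdiff_subset)
  refine ⟨?_, ?_, ?_⟩
  · ext e
    simp only [Finset.mem_union, Finset.mem_sdiff, Finset.mem_symmDiff]
    have h1 : e ∈ D → e ∈ A := fun h => hD h
    have h2 : e ∈ I → e ∉ A := fun h => Finset.disjoint_left.mp hI h
    tauto
  · rw [Finset.card_union_of_disjoint hdisj.symm, Finset.card_sdiff_of_subset hD]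
    have := Finset.card_le_card hD
    omega
  · unfold wSum
    rw [Finset.sum_union hdisj.symm]
    have := Finset.sum_sdiff (f := fun e : Fin n × Fin n => w e.1 e.2) hD
    linarith

def Concl (n k : ℕ) (w : Fin n → Fin n → ℝ) (M : Finset (Fin n × Fin n)) : Prop :=
  ∃ M' : Finset (Fin n × Fin n), IsMatching n M' ∧ M'.card = k + 1 ∧
    (∀ N, IsMatching n N → N.card = k + 1 → wSum n w N ≤ wSum n w M') ∧
    M.image Prod.fst ⊆ M'.image Prod.fst ∧
    M.image Prod.snd ⊆ M'.image Prod.snd ∧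
    ∃ p : Finset (Fin n × Fin n), IsAugmentingPath n M p ∧ M' = symmDiff M p

lemma key (n k : ℕ) (w : Fin n → Fin n → ℝ)
    (M : Finset (Fin n × Fin n)) (hM : IsMatching n M) (hcard : M.card = k)
    (hopt : ∀ N, IsMatching n N → N.card = k → wSum n w N ≤ wSum n w M) :
    ∀ m (N : Finset (Fin n × Fin n)), IsMatching n N → N.card = k + 1 →
      (∀ N₂, IsMatching n N₂ → N₂.card = k + 1 → wSum n w N₂ ≤ wSum n w N) →
      (symmDiff M N).card ≤ m → Concl n k w M := by
  intro m
  induction m with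
  | zero =>
    intro N hN hNcard _ hle
    exfalso
    have h1 : symmDiff M N = ∅ := Finset.card_eq_zero.mp (Nat.le_antisymm hle (Nat.zero_le _))
    have h2 : M = N := by
      have : symmDiff M N = (⊥ : Finset (Fin n × Fin n)) := h1
      rwa [symmDiff_eq_bot] at this
    rw [h2, hNcard] at hcard
    omega
  | succ m ih =>
    intro N hN hNcard hNopt hle
    classical
    have hMfst : (M.image Prod.fst).card = k := by
      rw [Finset.card_image_of_injOn, hcard]
      intro e he f hf hef
      by_contra h
      exact (hM e he f hf h).1 hef
    have hNfst : (N.image Prod.fst).card = k + 1 := by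
      rw [Finset.card_image_of_injOn, hNcard]
      intro e he f hf hef
      by_contra h
      exact (hN e he f hf h).1 hef
    have hns : ¬ (N.image Prod.fst ⊆ M.image Prod.fst) := fun h => by
      have := Finset.card_le_card h
      omega
    obtain ⟨u0, hu0N, hu0M⟩ := Finset.not_subset.mp hns
    have h0 : ∀ v, (u0, v) ∉ M := fun v hv => hu0M (Finset.mem_image.mpr ⟨(u0, v), hv, rfl⟩)
    obtain ⟨v0', hv0'⟩ : ∃ v, (u0, v) ∈ N := by
      obtain ⟨⟨a, b⟩, he, rfl⟩ := Finset.mem_image.mp hu0N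
      exact ⟨b, he⟩
    obtain ⟨t, ⟨at', hat⟩, hterm⟩ := walkA_terminal (M := M) (N := N) (u0 := u0) hM hN h0
    set u : ℕ → Fin n := fun i => (walkA n M N u0 i).getD u0 with hu_def
    set v : ℕ → Fin n := fun i => (pfstA n N (u i)).getD u0 with hv_def
    have hu : ∀ i ≤ t, walkA n M N u0 i = some (u i) := by
      intro i hi
      obtain ⟨b, hb⟩ := walkA_some_down t at' hat i hi
      rw [hu_def]
      simp [hb]
    have hu0eq : u 0 = u0 := by rw [hu_def]; simp [walkA]
    have hstep : ∀ i < t, (u i, v i) ∈ N ∧ (u (i + 1), v i) ∈ M := by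
      intro i hi
      have h1 := hu (i + 1) (by omega)
      obtain ⟨a, v', hwa, hvN, hvM⟩ := walkA_succ_some h1
      rw [hu i (by omega)] at hwa
      have ha : u i = a := Option.some.inj hwa
      rw [← ha] at hvN
      have hv' : v i = v' := by
        rw [hv_def]
        simp [pfstA_eq hN hvN]
      rw [hv']
      exact ⟨hvN, hvM⟩
    have uinj : ∀ i ≤ t, ∀ j ≤ t, u i = u j → i = j := by
      intro i hi j hj hij
      by_contra hne
      rcases Nat.lt_or_ge i j with hlt | hge
      · exact walkA_inj hM hN h0 i j (u j) hlt (hij ▸ hu i hi) (hu j hj)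
      · have hlt : j < i := by omega
        exact walkA_inj hM hN h0 j i (u i) hlt (hij ▸ hu j hj) (hu i hi)
    have hat' : at' = u t := Option.some.inj (hat.symm.trans (hu t le_rfl))
    have hterm' : (pfstA n N (u t)).bind (psndA n M) = none := by
      rw [walkA, hat, hat'] at hterm
      simpa using hterm
    cases hpf : pfstA n N (u t) with
    | some vt =>
      -- Case A: augmenting path found
      have hpsnone : psndA n M vt = none := by
        rw [hpf] at hterm'
        simpa using hterm'
      have hvt : v t = vt := by rw [hv_def]; simp [hpf]
      have hNt : (u t, v t) ∈ N := by rw [hvt]; exact pfstA_mem hpf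
      have hMvt : ∀ a, (a, v t) ∉ M := by rw [hvt]; exact psndA_none hpsnone
      have hNE : ∀ i ≤ t, (u i, v i) ∈ N := by
        intro i hi
        rcases Nat.eq_or_lt_of_le hi with rfl | hlt
        · exact hNt
        · exact (hstep i hlt).1
      have hME : ∀ i < t, (u (i + 1), v i) ∈ M := fun i hi => (hstep i hi).2
      have vinj : ∀ i ≤ t, ∀ j ≤ t, v i = v j → i = j := by
        intro i hi j hj hij
        exact uinj i hi j hj (matching_snd_unique hN (hNE i hi) (hij ▸ hNE j hj))
      have hNEnotM : ∀ i ≤ t, (u i, v i) ∉ M := by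
        intro i hi hmem
        rcases Nat.eq_zero_or_pos i with rfl | hpos
        · exact h0 (v 0) (hu0eq ▸ hmem)
        · have h1 : (u i, v (i - 1)) ∈ M := by
            have := hME (i - 1) (by omega)
            rwa [Nat.sub_add_cancel hpos] at this
          have h2 : v i = v (i - 1) := matching_fst_unique hM hmem h1
          have := vinj i hi (i - 1) (by omega) h2
          omega
      set NE := (Finset.range (t + 1)).image (fun i => (u i, v i)) with hNE_def
      set ME := (Finset.range t).image (fun i => (u (i + 1), v i)) with hME_def
      have hNEmem : ∀ e, e ∈ NE ↔ ∃ i, i ≤ t ∧ e = (u i, v i) := by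
        intro e
        rw [hNE_def]
        simp only [Finset.mem_image, Finset.mem_range, Nat.lt_succ_iff]
        exact ⟨fun ⟨i, hi, he⟩ => ⟨i, hi, he.symm⟩, fun ⟨i, hi, he⟩ => ⟨i, hi, he.symm⟩⟩
      have hMEmem : ∀ e, e ∈ ME ↔ ∃ i, i < t ∧ e = (u (i + 1), v i) := by
        intro e
        rw [hME_def]
        simp only [Finset.mem_image, Finset.mem_range]
        exact ⟨fun ⟨i, hi, he⟩ => ⟨i, hi, he.symm⟩, fun ⟨i, hi, he⟩ => ⟨i, hi, he.symm⟩⟩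
      have hMEsubM : ME ⊆ M := by
        intro e he
        obtain ⟨i, hi, rfl⟩ := (hMEmem e).mp he
        exact hME i hi
      have hNEdisjM : Disjoint NE M := by
        rw [Finset.disjoint_left]
        intro e he hem
        obtain ⟨i, hi, rfl⟩ := (hNEmem e).mp he
        exact hNEnotM i hi hem
      have hNEsubN : NE ⊆ N := by
        intro e he
        obtain ⟨i, hi, rfl⟩ := (hNEmem e).mp he
        exact hNE i hi
      have hMEdisjN : Disjoint ME N := by
        rw [Finset.disjoint_left]
        intro e he hem
        obtain ⟨i, hi, rfl⟩ := (hMEmem e).mp he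
        have := matching_snd_unique hN hem (hNE i (by omega))
        have := uinj (i + 1) (by omega) i (by omega) this
        omega
      have hNEcard : NE.card = t + 1 := by
        rw [hNE_def, Finset.card_image_of_injOn, Finset.card_range]
        intro i hi j hj hij
        simp only [Finset.coe_range, Set.mem_Iio, Nat.lt_succ_iff] at hi hj
        exact uinj i hi j hj (congrArg Prod.fst hij)
      have hMEcard : ME.card = t := by
        rw [hME_def, Finset.card_image_of_injOn, Finset.card_range]
        intro i hi j hj hij
        simp only [Finset.coe_range, Set.mem_Iio] at hi hj
        exact vinj i (by omega) j (by omega) (congrArg Prod.snd hij)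
      obtain ⟨hMeq, hMcard', hMw'⟩ := surgery w hMEsubM hNEdisjM
      obtain ⟨hNeq, hNcard', hNw'⟩ := surgery w hNEsubN hMEdisjN
      set M' := (M \ ME) ∪ NE with hM'_def
      set N' := (N \ NE) ∪ ME with hN'_def
      have hM'match : IsMatching n M' := by
        apply union_matching (matching_subset Finset.sdiff_subset hM)
        · intro e he f hf hef
          obtain ⟨i, hi, rfl⟩ := (hNEmem e).mp he
          obtain ⟨j, hj, rfl⟩ := (hNEmem f).mp hf
          have hij : i ≠ j := fun h => hef (by rw [h])
          exact ⟨fun h => hij (uinj i hi j hj h), fun h => hij (vinj i hi j hj h)⟩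
        · intro e he f hf
          obtain ⟨hem, henot⟩ := Finset.mem_sdiff.mp he
          obtain ⟨i, hi, rfl⟩ := (hNEmem f).mp hf
          constructor
          · intro h
            replace h : e.1 = u i := h
            rcases Nat.eq_zero_or_pos i with rfl | hpos
            · exact h0 e.2 (by rw [← hu0eq, ← h]; simpa using hem)
            · have h1 : (u i, v (i - 1)) ∈ M := by
                have := hME (i - 1) (by omega)
                rwa [Nat.sub_add_cancel hpos] at this
              have hem' : (u i, e.2) ∈ M := by rw [← h]; simpa using hem
              have h2 : e.2 = v (i - 1) := matching_fst_unique hM hem' h1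
              apply henot
              rw [hMEmem]
              refine ⟨i - 1, by omega, ?_⟩
              rw [Nat.sub_add_cancel hpos]
              exact Prod.ext h h2
          · intro h
            replace h : e.2 = v i := h
            rcases Nat.eq_or_lt_of_le hi with rfl | hlt
            · exact hMvt e.1 (by rw [← h]; simpa using hem)
            · have hem' : (e.1, v i) ∈ M := by rw [← h]; simpa using hem
              have h2 : e.1 = u (i + 1) := (matching_snd_unique hM hem' (hME i hlt))
              exact henot ((hMEmem e).mpr ⟨i, hlt, Prod.ext h2 h⟩)
      have hM'card : M'.card = k + 1 := by
        rw [hMEcard, hcard, hNEcard] at hMcard'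
        omega
      have hN'match : IsMatching n N' := by
        apply union_matching (matching_subset Finset.sdiff_subset hN)
        · intro e he f hf hef
          obtain ⟨i, hi, rfl⟩ := (hMEmem e).mp he
          obtain ⟨j, hj, rfl⟩ := (hMEmem f).mp hf
          have hij : i ≠ j := fun h => hef (by rw [h])
          refine ⟨fun h => hij ?_, fun h => hij (vinj i (by omega) j (by omega) h)⟩
          have := uinj (i + 1) (by omega) (j + 1) (by omega) h
          omega
        · intro e he f hf
          obtain ⟨hem, henot⟩ := Finset.mem_sdiff.mp he
          obtain ⟨i, hi, rfl⟩ := (hMEmem f).mp hf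
          constructor
          · intro h
            replace h : e.1 = u (i + 1) := h
            have hem' : (u (i + 1), e.2) ∈ N := by rw [← h]; simpa using hem
            have h2 : e.2 = v (i + 1) := matching_fst_unique hN hem' (hNE (i + 1) (by omega))
            exact henot ((hNEmem e).mpr ⟨i + 1, by omega, Prod.ext h h2⟩)
          · intro h
            replace h : e.2 = v i := h
            have hem' : (e.1, v i) ∈ N := by rw [← h]; simpa using hem
            have h2 : e.1 = u i := matching_snd_unique hN hem' (hNE i (by omega))
            exact henot ((hNEmem e).mpr ⟨i, by omega, Prod.ext h2 h⟩)
      have hN'card : N'.card = k := by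
        rw [hNEcard, hNcard, hMEcard] at hNcard'
        omega
      have hN'w := hopt N' hN'match hN'card
      have hM'opt : ∀ N₂, IsMatching n N₂ → N₂.card = k + 1 → wSum n w N₂ ≤ wSum n w M' := by
        intro N₂ h1 h2
        have := hNopt N₂ h1 h2
        linarith [hNw', hMw', hN'w]
      have hfst : M.image Prod.fst ⊆ M'.image Prod.fst := by
        intro x hx
        obtain ⟨e, he, rfl⟩ := Finset.mem_image.mp hx
        by_cases hme : e ∈ ME
        · obtain ⟨i, hi, rfl⟩ := (hMEmem e).mp hme
          exact Finset.mem_image.mpr ⟨(u (i + 1), v (i + 1)),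
            Finset.mem_union_right _ ((hNEmem _).mpr ⟨i + 1, by omega, rfl⟩), rfl⟩
        · exact Finset.mem_image.mpr ⟨e, Finset.mem_union_left _ (Finset.mem_sdiff.mpr ⟨he, hme⟩), rfl⟩
      have hsnd : M.image Prod.snd ⊆ M'.image Prod.snd := by
        intro x hx
        obtain ⟨e, he, rfl⟩ := Finset.mem_image.mp hx
        by_cases hme : e ∈ ME
        · obtain ⟨i, hi, rfl⟩ := (hMEmem e).mp hme
          exact Finset.mem_image.mpr ⟨(u i, v i),
            Finset.mem_union_right _ ((hNEmem _).mpr ⟨i, by omega, rfl⟩), rfl⟩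
        · exact Finset.mem_image.mpr ⟨e, Finset.mem_union_left _ (Finset.mem_sdiff.mpr ⟨he, hme⟩), rfl⟩
      refine ⟨M', hM'match, hM'card, hM'opt, hfst, hsnd, NE ∪ ME,
        ⟨t, u, v, uinj, vinj, hNEnotM, hME, ?_, ?_, ?_⟩, ?_⟩
      · intro e he h
        exact h0 e.2 (by rw [← hu0eq, ← h]; simpa using he)
      · intro e he h
        exact hMvt e.1 (by rw [← h]; simpa using he)
      · rw [hNE_def, hME_def]
      · rw [Finset.union_comm ME NE] at hMeq
        exact hMeq
    | none =>
      -- Case B: dead end, rotate N and recurse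
      have hNt_none : ∀ v', (u t, v') ∉ N := pfstA_none hpf
      have ht1 : 1 ≤ t := by
        rcases Nat.eq_zero_or_pos t with rfl | h
        · exact absurd (by rw [hu0eq]; exact hv0') (hNt_none v0')
        · exact h
      have hNE : ∀ i < t, (u i, v i) ∈ N := fun i hi => (hstep i hi).1
      have hME : ∀ i < t, (u (i + 1), v i) ∈ M := fun i hi => (hstep i hi).2
      have vinj : ∀ i < t, ∀ j < t, v i = v j → i = j := by
        intro i hi j hj hij
        exact uinj i (by omega) j (by omega)
          (matching_snd_unique hN (hNE i hi) (hij ▸ hNE j hj))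
      have hNEnotM : ∀ i < t, (u i, v i) ∉ M := by
        intro i hi hmem
        rcases Nat.eq_zero_or_pos i with rfl | hpos
        · exact h0 (v 0) (hu0eq ▸ hmem)
        · have h1 : (u i, v (i - 1)) ∈ M := by
            have := hME (i - 1) (by omega)
            rwa [Nat.sub_add_cancel hpos] at this
          have h2 : v i = v (i - 1) := matching_fst_unique hM hmem h1
          have := vinj i hi (i - 1) (by omega) h2
          omega
      set NE := (Finset.range t).image (fun i => (u i, v i)) with hNE_def
      set ME := (Finset.range t).image (fun i => (u (i + 1), v i)) with hME_def
      have hNEmem : ∀ e, e ∈ NE ↔ ∃ i, i < t ∧ e = (u i, v i) := by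
        intro e
        rw [hNE_def]
        simp only [Finset.mem_image, Finset.mem_range]
        exact ⟨fun ⟨i, hi, he⟩ => ⟨i, hi, he.symm⟩, fun ⟨i, hi, he⟩ => ⟨i, hi, he.symm⟩⟩
      have hMEmem : ∀ e, e ∈ ME ↔ ∃ i, i < t ∧ e = (u (i + 1), v i) := by
        intro e
        rw [hME_def]
        simp only [Finset.mem_image, Finset.mem_range]
        exact ⟨fun ⟨i, hi, he⟩ => ⟨i, hi, he.symm⟩, fun ⟨i, hi, he⟩ => ⟨i, hi, he.symm⟩⟩
      have hMEsubM : ME ⊆ M := by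
        intro e he
        obtain ⟨i, hi, rfl⟩ := (hMEmem e).mp he
        exact hME i hi
      have hNEdisjM : Disjoint NE M := by
        rw [Finset.disjoint_left]
        intro e he hem
        obtain ⟨i, hi, rfl⟩ := (hNEmem e).mp he
        exact hNEnotM i hi hem
      have hNEsubN : NE ⊆ N := by
        intro e he
        obtain ⟨i, hi, rfl⟩ := (hNEmem e).mp he
        exact hNE i hi
      have hMEdisjN : Disjoint ME N := by
        rw [Finset.disjoint_left]
        intro e he hem
        obtain ⟨i, hi, rfl⟩ := (hMEmem e).mp he
        have := matching_snd_unique hN hem (hNE i hi)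
        have := uinj (i + 1) (by omega) i (by omega) this
        omega
      have hNEcard : NE.card = t := by
        rw [hNE_def, Finset.card_image_of_injOn, Finset.card_range]
        intro i hi j hj hij
        simp only [Finset.coe_range, Set.mem_Iio] at hi hj
        exact uinj i (by omega) j (by omega) (congrArg Prod.fst hij)
      have hMEcard : ME.card = t := by
        rw [hME_def, Finset.card_image_of_injOn, Finset.card_range]
        intro i hi j hj hij
        simp only [Finset.coe_range, Set.mem_Iio] at hi hj
        exact vinj i hi j hj (congrArg Prod.snd hij)
      obtain ⟨hMeq, hMcard', hMw'⟩ := surgery w hMEsubM hNEdisjM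
      obtain ⟨hNeq, hNcard', hNw'⟩ := surgery w hNEsubN hMEdisjN
      set M'' := (M \ ME) ∪ NE with hM''_def
      set N' := (N \ NE) ∪ ME with hN'_def
      have hM''match : IsMatching n M'' := by
        apply union_matching (matching_subset Finset.sdiff_subset hM)
        · intro e he f hf hef
          obtain ⟨i, hi, rfl⟩ := (hNEmem e).mp he
          obtain ⟨j, hj, rfl⟩ := (hNEmem f).mp hf
          have hij : i ≠ j := fun h => hef (by rw [h])
          exact ⟨fun h => hij (uinj i (by omega) j (by omega) h),
            fun h => hij (vinj i hi j hj h)⟩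
        · intro e he f hf
          obtain ⟨hem, henot⟩ := Finset.mem_sdiff.mp he
          obtain ⟨i, hi, rfl⟩ := (hNEmem f).mp hf
          constructor
          · intro h
            replace h : e.1 = u i := h
            rcases Nat.eq_zero_or_pos i with rfl | hpos
            · exact h0 e.2 (by rw [← hu0eq, ← h]; simpa using hem)
            · have h1 : (u i, v (i - 1)) ∈ M := by
                have := hME (i - 1) (by omega)
                rwa [Nat.sub_add_cancel hpos] at this
              have hem' : (u i, e.2) ∈ M := by rw [← h]; simpa using hem
              have h2 : e.2 = v (i - 1) := matching_fst_unique hM hem' h1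
              apply henot
              rw [hMEmem]
              refine ⟨i - 1, by omega, ?_⟩
              rw [Nat.sub_add_cancel hpos]
              exact Prod.ext h h2
          · intro h
            replace h : e.2 = v i := h
            have hem' : (e.1, v i) ∈ M := by rw [← h]; simpa using hem
            have h2 : e.1 = u (i + 1) := matching_snd_unique hM hem' (hME i hi)
            exact henot ((hMEmem e).mpr ⟨i, hi, Prod.ext h2 h⟩)
      have hN'match : IsMatching n N' := by
        apply union_matching (matching_subset Finset.sdiff_subset hN)
        · intro e he f hf hef
          obtain ⟨i, hi, rfl⟩ := (hMEmem e).mp he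
          obtain ⟨j, hj, rfl⟩ := (hMEmem f).mp hf
          have hij : i ≠ j := fun h => hef (by rw [h])
          refine ⟨fun h => hij ?_, fun h => hij (vinj i hi j hj h)⟩
          have := uinj (i + 1) (by omega) (j + 1) (by omega) h
          omega
        · intro e he f hf
          obtain ⟨hem, henot⟩ := Finset.mem_sdiff.mp he
          obtain ⟨i, hi, rfl⟩ := (hMEmem f).mp hf
          constructor
          · intro h
            replace h : e.1 = u (i + 1) := h
            rcases Nat.eq_or_lt_of_le (Nat.succ_le_of_lt hi) with heq | hlt
            · have hem' : (u t, e.2) ∈ N := by rw [← heq, ← h]; simpa using hem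
              exact hNt_none e.2 hem'
            · have hem' : (u (i + 1), e.2) ∈ N := by rw [← h]; simpa using hem
              have h2 : e.2 = v (i + 1) := matching_fst_unique hN hem' (hNE (i + 1) hlt)
              exact henot ((hNEmem e).mpr ⟨i + 1, hlt, Prod.ext h h2⟩)
          · intro h
            replace h : e.2 = v i := h
            have hem' : (e.1, v i) ∈ N := by rw [← h]; simpa using hem
            have h2 : e.1 = u i := matching_snd_unique hN hem' (hNE i hi)
            exact henot ((hNEmem e).mpr ⟨i, hi, Prod.ext h2 h⟩)
      have hN'card : N'.card = k + 1 := by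
        rw [hNEcard, hNcard, hMEcard] at hNcard'
        omega
      have hM''card : M''.card = k := by
        rw [hMEcard, hcard, hNEcard] at hMcard'
        omega
      have hM''w := hopt M'' hM''match hM''card
      have hN'opt : ∀ N₂, IsMatching n N₂ → N₂.card = k + 1 → wSum n w N₂ ≤ wSum n w N' := by
        intro N₂ h1 h2
        have := hNopt N₂ h1 h2
        linarith [hNw', hMw', hM''w]
      have hu0v0NE : (u 0, v 0) ∈ NE := (hNEmem _).mpr ⟨0, by omega, rfl⟩
      have hmemMN : (u 0, v 0) ∈ symmDiff M N := by
        rw [Finset.mem_symmDiff]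
        exact Or.inr ⟨hNE 0 (by omega), hNEnotM 0 (by omega)⟩
      have hnot : (u 0, v 0) ∉ symmDiff M N' := by
        rw [Finset.mem_symmDiff]
        rintro (⟨h1, -⟩ | ⟨h1, -⟩)
        · exact hNEnotM 0 (by omega) h1
        · rcases Finset.mem_union.mp h1 with h2 | h2
          · exact (Finset.mem_sdiff.mp h2).2 hu0v0NE
          · obtain ⟨j, hj, hje⟩ := (hMEmem _).mp h2
            have := uinj 0 (by omega) (j + 1) (by omega) (congrArg Prod.fst hje)
            omega
      have hsub : symmDiff M N' ⊆ symmDiff M N := by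
        intro e he
        rw [Finset.mem_symmDiff] at he ⊢
        rcases he with ⟨heM, heN'⟩ | ⟨heN', heM⟩
        · refine Or.inl ⟨heM, fun heN => ?_⟩
          apply heN'
          apply Finset.mem_union_left
          exact Finset.mem_sdiff.mpr ⟨heN, Finset.disjoint_right.mp hNEdisjM heM⟩
        · rcases Finset.mem_union.mp heN' with h1 | h1
          · exact Or.inr ⟨(Finset.mem_sdiff.mp h1).1, heM⟩
          · exact absurd (hMEsubM h1) heM
      have hcardlt : (symmDiff M N').card ≤ m := by
        have h1 : symmDiff M N' ⊆ (symmDiff M N).erase (u 0, v 0) :=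
          Finset.subset_erase.mpr ⟨hsub, hnot⟩
        have h2 := Finset.card_le_card h1
        have h3 := Finset.card_erase_of_mem hmemMN
        have h4 := Finset.card_pos.mpr ⟨_, hmemMN⟩
        omega
      exact ih N' hN'match hN'card hN'opt hcardlt

/-- from a maximum-weight k-matching `M` in `K_{n,n}` (k < n), there is a
maximum-weight (k+1)-matching `M'` matching all vertices matched by `M` plus one extra vertex
on each side; equivalently `M' = M △ p` for a single augmenting path `p` w.r.t. `M`. -/
theorem stmt0 (n k : ℕ) (hk : k < n) (w : Fin n → Fin n → ℝ)
    (M : Finset (Fin n × Fin n)) (hM : IsMatching n M) (hcard : M.card = k)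
    (hopt : ∀ N, IsMatching n N → N.card = k → wSum n w N ≤ wSum n w M) :
    ∃ M' : Finset (Fin n × Fin n), IsMatching n M' ∧ M'.card = k + 1 ∧
      (∀ N, IsMatching n N → N.card = k + 1 → wSum n w N ≤ wSum n w M') ∧
      M.image Prod.fst ⊆ M'.image Prod.fst ∧
      M.image Prod.snd ⊆ M'.image Prod.snd ∧
      ∃ p : Finset (Fin n × Fin n), IsAugmentingPath n M p ∧ M' = symmDiff M p := by
  obtain ⟨N, hN, hNcard, hNopt⟩ := exists_maxMatching n (k + 1) hk w
  exact key n k w M hM hcard hopt (symmDiff M N).card N hN hNcard hNopt le_rfl
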